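/- There is no ternary operation f on {0,1,2} that preserves the relation φ = {(0,1),(1,2),(2,0)} and satisfies the 3-cyclic identity f(x,y,z) = f(y,z,x) for all x,y,z. Consequently, the clone 𝒞₃ = Pol(φ, {0},{1},{2}) has no 3-cyclic operation, whereas the Boolean minority operation min (min(x,y,y)=min(y,x,y)=min(y,y,x)=x on {0,1}) is a 3-cyclic operation in 𝒵₂ = Pol({(x,y,z,w) ∈ {0,1}⁴ : w = x+y+z mod 2}, {0},{1}); hence there is no minion homomorphism from 𝒵₂ to 𝒞₃. -/

import Mathlib

/-- `f` preserves the `k`-ary relation `R`. -/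
def Preserves {A : Type} {n k : ℕ} (f : (Fin n → A) → A) (R : Set (Fin k → A)) : Prop :=
  ∀ r : Fin n → Fin k → A, (∀ i, r i ∈ R) → (fun j => f fun i => r i j) ∈ R

/-- A family of operations on `A`, indexed so that `C n` are the `(n+1)`-ary operations. -/
abbrev Ops (A : Type) := ∀ n : ℕ, Set ((Fin (n + 1) → A) → A)

/-- `C` is a clone: it contains all projections and is closed under composition. -/
structure IsClone {A : Type} (C : Ops A) : Prop where
  proj : ∀ (n : ℕ) (i : Fin (n + 1)), (fun x => x i) ∈ C n
  comp : ∀ (n m : ℕ) (f : (Fin (n + 1) → A) → A) (g : Fin (n + 1) → (Fin (m + 1) → A) → A),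
      f ∈ C n → (∀ i, g i ∈ C m) → (fun x => f fun i => g i x) ∈ C m

/-- The minor of `f` along `σ`. -/
def Minor {A : Type} {n r : ℕ} (f : (Fin n → A) → A) (σ : Fin n → Fin r) :
    (Fin r → A) → A := fun x => f (x ∘ σ)

/-- `ξ` is a minion homomorphism from `C` to `D`: it maps members of `C` to members of `D`
and commutes with taking minors (on members of `C`). -/
def IsMinionHom {A B : Type} (C : Ops A) (D : Ops B)
    (ξ : ∀ n : ℕ, ((Fin (n + 1) → A) → A) → ((Fin (n + 1) → B) → B)) : Prop :=
  (∀ n f, f ∈ C n → ξ n f ∈ D n) ∧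
    ∀ (n r : ℕ) (f : (Fin (n + 1) → A) → A) (σ : Fin (n + 1) → Fin (r + 1)),
      f ∈ C n → ξ r (Minor f σ) = Minor (ξ n f) σ

/-- There exists a minion homomorphism from `C` to `D`. -/
def MinorLE {A B : Type} (C : Ops A) (D : Ops B) : Prop := ∃ ξ, IsMinionHom C D ξ

/-- `C` and `D` are minor-equivalent. -/
def MinorEquiv {A B : Type} (C : Ops A) (D : Ops B) : Prop := MinorLE C D ∧ MinorLE D C

/-- A subset of `A` viewed as a unary relation. -/
def unRel {A : Type} (s : Set A) : Set (Fin 1 → A) := {t | t 0 ∈ s}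

def psi2 : Set (Fin 2 → Fin 3) :=
  {t | (t 0, t 1) ∈ ({(0, 1), (1, 0), (2, 2)} : Set (Fin 3 × Fin 3))}

def psi2' : Set (Fin 2 → Fin 3) :=
  {t | (t 0, t 1) ∈ ({(0, 1), (1, 0)} : Set (Fin 3 × Fin 3))}

def phi : Set (Fin 2 → Fin 3) :=
  {t | (t 0, t 1) ∈ ({(0, 1), (1, 2), (2, 0)} : Set (Fin 3 × Fin 3))}

def mu2 : Set (Fin 2 → Fin 3) :=
  {t | (t 0, t 1) ∈ ({(0, 0), (1, 1), (2, 2), (0, 1), (1, 0)} : Set (Fin 3 × Fin 3))}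

def rho2 : Set (Fin 2 → Fin 3) :=
  {t | (t 0, t 1) ∈ ({(0, 2), (1, 2), (2, 0), (2, 1)} : Set (Fin 3 × Fin 3))}

/-- The minority value of `x, y, z` when at most two distinct values occur
(and `x` if all three are distinct). -/
def mino {A : Type} [DecidableEq A] (x y z : A) : A :=
  if x = y then z else if x = z then y else x

/-- The relation `T_i' = {(x,y,z,min(x,y,z)) : x,y,z ≠ i}`. -/
def Tprime (i : Fin 3) : Set (Fin 4 → Fin 3) :=
  {t | t 0 ≠ i ∧ t 1 ≠ i ∧ t 2 ≠ i ∧ t 3 = mino (t 0) (t 1) (t 2)}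

/-- The relation `T₂ = T₂' ∪ {(2,2,2,2)}`. -/
def T2rel : Set (Fin 4 → Fin 3) := insert (fun _ => 2) (Tprime 2)

/-- The relation `T = {(x,y,z,x-y+z mod 3)}`. -/
def Trel : Set (Fin 4 → Fin 3) := {t | t 3 = t 0 - t 1 + t 2}

def neqRel : Set (Fin 2 → Fin 2) := {t | t 0 ≠ t 1}

/-- The relation `{(x,y,z,w) ∈ {0,1}⁴ : w = x+y+z mod 2}`. -/
def Z2rel : Set (Fin 4 → Fin 2) := {t | t 3 = t 0 + t 1 + t 2}

/-- `ℐ₂ = Pol({0},{1})` on `{0,1}`. -/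
def CloneI2 : Ops (Fin 2) := fun _ =>
  {f | Preserves f (unRel {0}) ∧ Preserves f (unRel {1})}

/-- `𝒞₂ = Pol(≠,{0},{1})` on `{0,1}`. -/
def CloneC2 : Ops (Fin 2) := fun _ =>
  {f | Preserves f neqRel ∧ Preserves f (unRel {0}) ∧ Preserves f (unRel {1})}

/-- `𝒵₂ = Pol({(x,y,z,w) : w = x+y+z mod 2},{0},{1})` on `{0,1}`. -/
def CloneZ2 : Ops (Fin 2) := fun _ =>
  {f | Preserves f Z2rel ∧ Preserves f (unRel {0}) ∧ Preserves f (unRel {1})}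

/-- `𝒞₃ = Pol(φ,{0},{1},{2})` on `{0,1,2}`. -/
def CloneC3 : Ops (Fin 3) := fun _ =>
  {f | Preserves f phi ∧ ∀ c : Fin 3, Preserves f (unRel {c})}

/-- The Boolean minority operation on `{0,1}`. -/
def min2 : (Fin 3 → Fin 2) → Fin 2 := fun x => x 0 + x 1 + x 2

/-- No ternary operation on `{0,1,2}` preserving `φ` is 3-cyclic; the Boolean minority
operation is a 3-cyclic member of `𝒵₂`; hence there is no minion homomorphism from
`𝒵₂` to `𝒞₃ = Pol(φ,{0},{1},{2})`. -/

lemma no_cyclic : ¬ ∃ f : (Fin 3 → Fin 3) → Fin 3,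
    Preserves f phi ∧ ∀ x y z : Fin 3, f ![x, y, z] = f ![y, z, x] := by
  rintro ⟨f, hp, hc⟩
  have h := hp ![![0,1], ![1,2], ![2,0]] (by
    intro i
    fin_cases i <;> simp [phi])
  have e0 : (fun i => (![![0,1], ![1,2], ![2,0]] : Fin 3 → Fin 2 → Fin 3) i 0) = ![0,1,2] := by
    funext i; fin_cases i <;> rfl
  have e1 : (fun i => (![![0,1], ![1,2], ![2,0]] : Fin 3 → Fin 2 → Fin 3) i 1) = ![1,2,0] := by
    funext i; fin_cases i <;> rfl
  have h2 : ((fun j => f fun i => (![![0,1], ![1,2], ![2,0]] : Fin 3 → Fin 2 → Fin 3) i j) 0,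
      (fun j => f fun i => (![![0,1], ![1,2], ![2,0]] : Fin 3 → Fin 2 → Fin 3) i j) 1)
      ∈ ({(0, 1), (1, 2), (2, 0)} : Set (Fin 3 × Fin 3)) := h
  simp only at h2
  rw [e0, e1, ← hc 0 1 2] at h2
  rcases h2 with h2 | h2 | h2 <;>
    · have := congrArg Prod.fst h2
      have := congrArg Prod.snd h2
      simp_all

lemma min2_mem : min2 ∈ CloneZ2 2 := by
  refine ⟨?_, ?_, ?_⟩
  · intro r hr
    have h0 := hr 0
    have h1 := hr 1
    have h2 := hr 2
    simp only [Z2rel, Set.mem_setOf_eq] at h0 h1 h2 ⊢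
    simp only [min2]
    rw [h0, h1, h2]; open Fin.CommRing in ring
  · intro r hr
    have h0 := hr 0
    have h1 := hr 1
    have h2 := hr 2
    simp only [unRel, Set.mem_setOf_eq, Set.mem_singleton_iff] at h0 h1 h2 ⊢
    simp [min2, h0, h1, h2]
  · intro r hr
    have h0 := hr 0
    have h1 := hr 1
    have h2 := hr 2
    simp only [unRel, Set.mem_setOf_eq, Set.mem_singleton_iff] at h0 h1 h2 ⊢
    simp [min2, h0, h1, h2]

lemma min2_cyclic_minor : Minor min2 ![1, 2, 0] = min2 := by
  funext x
  simp only [Minor, min2, Function.comp]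
  have : (![1, 2, 0] : Fin 3 → Fin 3) 0 = 1 := rfl
  simp [Matrix.cons_val_zero, Matrix.cons_val_one]
  open Fin.CommRing in ring

theorem stmt19 :
    (¬ ∃ f : (Fin 3 → Fin 3) → Fin 3,
      Preserves f phi ∧ ∀ x y z : Fin 3, f ![x, y, z] = f ![y, z, x]) ∧
    ((∀ x y : Fin 2, min2 ![x, y, y] = x ∧ min2 ![y, x, y] = x ∧ min2 ![y, y, x] = x) ∧
      min2 ∈ CloneZ2 2 ∧
      (∀ x y z : Fin 2, min2 ![x, y, z] = min2 ![y, z, x])) ∧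
    ¬ MinorLE CloneZ2 CloneC3 := by
  refine ⟨no_cyclic, ⟨by decide, min2_mem, by decide⟩, ?_⟩
  rintro ⟨ξ, hmem, hminor⟩
  have hg : ξ 2 min2 ∈ CloneC3 2 := hmem 2 min2 min2_mem
  have hcyc : Minor (ξ 2 min2) ![1,2,0] = ξ 2 min2 := by
    rw [← hminor 2 2 min2 ![1,2,0] min2_mem, min2_cyclic_minor]
  apply no_cyclic
  refine ⟨ξ 2 min2, hg.1, ?_⟩
  intro x y z
  have := congrFun hcyc ![x, y, z]
  rw [← this]
  simp only [Minor]
  congr 1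
  funext i; fin_cases i <;> rfl
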